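/- arXiv:1906.06757 — 2 statements merged into one kernel-verified Lean document; each statement's English description precedes it below -/
import Mathlib

section
/- Let g be a metric on the connected open set U and let V be a Killing vector field for g, i.e., a smooth vector field such that for every g-geodesic γ the function τ ↦ γ'(τ)ᵀ g(γ(τ)) V(γ(τ)) is constant. If V(p) = 0 and all first order partial derivatives of all components of V vanish at some point p ∈ U, then V is identically zero on U. -/
open Matrix

noncomputable section

/-- Partial derivative in the `i`-th coordinate direction of a real-valued function on `ℝⁿ`. -/
def pd {n : ℕ} (i : Fin n) (f : (Fin n → ℝ) → ℝ) : (Fin n → ℝ) → ℝ :=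
  fun x => fderiv ℝ f x (Pi.single i 1)

/-- Iterated partial derivatives along a list of coordinate directions. -/
def iterPD {n : ℕ} : List (Fin n) → ((Fin n → ℝ) → ℝ) → ((Fin n → ℝ) → ℝ)
  | [], f => f
  | i :: l, f => pd i (iterPD l f)

/-- `g` is a (pseudo-Riemannian) metric on `U`: a smooth field of invertible symmetric
real `n×n` matrices. -/
structure IsMetricOn {n : ℕ} (U : Set (Fin n → ℝ))
    (g : (Fin n → ℝ) → Matrix (Fin n) (Fin n) ℝ) : Prop where
  smooth : ∀ i j : Fin n, ContDiffOn ℝ (⊤ : ℕ∞) (fun x => g x i j) U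
  symm : ∀ x ∈ U, (g x).IsSymm
  nondeg : ∀ x ∈ U, IsUnit (g x).det

/-- The Christoffel symbols `Γ^k_{ij}` of the metric `g`. -/
def Gamma {n : ℕ} (g : (Fin n → ℝ) → Matrix (Fin n) (Fin n) ℝ)
    (k i j : Fin n) (x : Fin n → ℝ) : ℝ :=
  (1/2) * ∑ ℓ, (g x)⁻¹ k ℓ *
    (pd i (fun y => g y ℓ j) x + pd j (fun y => g y ℓ i) x - pd ℓ (fun y => g y i j) x)

/-- An open interval of `ℝ` (possibly empty or unbounded): an open order-connected set. -/
def IsOpenInterval (I : Set ℝ) : Prop := IsOpen I ∧ I.OrdConnected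

/-- `γ` is a `g`-geodesic defined on the open interval `I`, with values in `U`. -/
structure IsGeodesicOn {n : ℕ} (U : Set (Fin n → ℝ))
    (g : (Fin n → ℝ) → Matrix (Fin n) (Fin n) ℝ)
    (γ : ℝ → (Fin n → ℝ)) (I : Set ℝ) : Prop where
  interval : IsOpenInterval I
  smooth : ∀ k : Fin n, ContDiffOn ℝ (⊤ : ℕ∞) (fun s => γ s k) I
  mem : ∀ t ∈ I, γ t ∈ U
  eqn : ∀ t ∈ I, ∀ k : Fin n,
    deriv (deriv fun s => γ s k) t
      + ∑ i, ∑ j, Gamma g k i j (γ t) * deriv (fun s => γ s i) t * deriv (fun s => γ s j) t = 0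

/-- `g` and `gbar` are projectively equivalent on `U`: every `g`-geodesic with nowhere
vanishing velocity becomes, after a smooth reparameterization (a diffeomorphism of open
intervals), a `gbar`-geodesic. -/
def ProjEquiv {n : ℕ} (U : Set (Fin n → ℝ))
    (g gbar : (Fin n → ℝ) → Matrix (Fin n) (Fin n) ℝ) : Prop :=
  ∀ (γ : ℝ → (Fin n → ℝ)) (I : Set ℝ), IsGeodesicOn U g γ I →
    (∀ t ∈ I, ∃ k, deriv (fun s => γ s k) t ≠ 0) →
    ∃ (φ : ℝ → ℝ) (J : Set ℝ), IsOpenInterval J ∧ ContDiffOn ℝ (⊤ : ℕ∞) φ J ∧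
      Set.InjOn φ J ∧ φ '' J = I ∧ (∀ t ∈ J, deriv φ t ≠ 0) ∧
      IsGeodesicOn U gbar (γ ∘ φ) J

/-- The (1,1)-tensor `L = |det gbar / det g|^{1/(n+1)} gbar⁻¹ g` built from `g` and `gbar`. -/
def Lfield {n : ℕ} (g gbar : (Fin n → ℝ) → Matrix (Fin n) (Fin n) ℝ)
    (x : Fin n → ℝ) : Matrix (Fin n) (Fin n) ℝ :=
  |(gbar x).det / (g x).det| ^ ((1 : ℝ)/((n : ℝ)+1)) • ((gbar x)⁻¹ * g x)

/-- The family `S(t) = adjugate (t·Id − L)`. -/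
def Sfield {n : ℕ} (g gbar : (Fin n → ℝ) → Matrix (Fin n) (Fin n) ℝ) (t : ℝ)
    (x : Fin n → ℝ) : Matrix (Fin n) (Fin n) ℝ :=
  (t • (1 : Matrix (Fin n) (Fin n) ℝ) - Lfield g gbar x).adjugate

/-- The second order operator associated (via Carter's quantization) to a field `A` of
symmetric matrices: `Â f = |det g|^{-1/2} ∑ᵢⱼ ∂ᵢ(|det g|^{1/2} Aⁱʲ ∂ⱼ f)`. -/
def assocOp {n : ℕ} (g A : (Fin n → ℝ) → Matrix (Fin n) (Fin n) ℝ)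
    (f : (Fin n → ℝ) → ℝ) (x : Fin n → ℝ) : ℝ :=
  |(g x).det| ^ (-(1 : ℝ)/2) * ∑ i, ∑ j,
    pd i (fun y => |(g y).det| ^ ((1 : ℝ)/2) * A y i j * pd j f y) x

/-- The operator `K̂^{(t)}`, associated to `A = S(t)·g⁻¹`. -/
def Khat {n : ℕ} (g gbar : (Fin n → ℝ) → Matrix (Fin n) (Fin n) ℝ) (t : ℝ)
    (f : (Fin n → ℝ) → ℝ) (x : Fin n → ℝ) : ℝ :=
  assocOp g (fun y => Sfield g gbar t y * (g y)⁻¹) f x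

/-- The Beltrami-Laplace operator of `g`, associated to `A = g⁻¹`. -/
def LaplaceOp {n : ℕ} (g : (Fin n → ℝ) → Matrix (Fin n) (Fin n) ℝ)
    (f : (Fin n → ℝ) → ℝ) (x : Fin n → ℝ) : ℝ :=
  assocOp g (fun y => (g y)⁻¹) f x

/-- `K` is a Killing tensor for `g` on `U`: the associated quadratic function is constant
along every `g`-geodesic. -/
def IsKillingTensorOn {n : ℕ} (U : Set (Fin n → ℝ))
    (g K : (Fin n → ℝ) → Matrix (Fin n) (Fin n) ℝ) : Prop :=
  ∀ (γ : ℝ → (Fin n → ℝ)) (I : Set ℝ), IsGeodesicOn U g γ I →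
    ∀ τ₁ ∈ I, ∀ τ₂ ∈ I,
      (∑ i, ∑ j, deriv (fun s => γ s i) τ₁ * K (γ τ₁) i j * deriv (fun s => γ s j) τ₁) =
      (∑ i, ∑ j, deriv (fun s => γ s i) τ₂ * K (γ τ₂) i j * deriv (fun s => γ s j) τ₂)

/-- The covariant derivative `∇_k T_{ij}` of a (0,2)-tensor field `T`. -/
def covDeriv2 {n : ℕ} (g T : (Fin n → ℝ) → Matrix (Fin n) (Fin n) ℝ)
    (k i j : Fin n) (x : Fin n → ℝ) : ℝ :=
  pd k (fun y => T y i j) x - (∑ s, Gamma g s k i x * T x s j)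
    - ∑ s, Gamma g s k j x * T x i s

/-- The Ricci curvature tensor `R_{ij}` of `g`. -/
def Ricci {n : ℕ} (g : (Fin n → ℝ) → Matrix (Fin n) (Fin n) ℝ)
    (i j : Fin n) (x : Fin n → ℝ) : ℝ :=
  (∑ ℓ, pd ℓ (fun y => Gamma g ℓ i j y) x) - (∑ ℓ, pd i (fun y => Gamma g ℓ ℓ j y) x)
    + ∑ ℓ, ∑ s, (Gamma g ℓ ℓ s x * Gamma g s i j x - Gamma g ℓ i s x * Gamma g s ℓ j x)

/-- A function vanishes up to order `k` at `p`: it and all its partial derivatives of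
order `≤ k` vanish at `p`. -/
def VanishUpTo {n : ℕ} (k : ℕ) (f : (Fin n → ℝ) → ℝ) (p : Fin n → ℝ) : Prop :=
  ∀ l : List (Fin n), l.length ≤ k → iterPD l f p = 0


/-- The plain (flat) second order operator `Â f = ∑ᵢⱼ ∂ᵢ(Aⁱʲ ∂ⱼ f)` associated to a
matrix field `A`. -/
def opPlain {n : ℕ} (A : (Fin n → ℝ) → Matrix (Fin n) (Fin n) ℝ)
    (f : (Fin n → ℝ) → ℝ) (x : Fin n → ℝ) : ℝ :=
  ∑ i, ∑ j, pd i (fun y => A y i j * pd j f y) x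

end

noncomputable section KillingProof
open Filter Set

variable {n : ℕ} {U : Set (Fin n → ℝ)}

/-- A finset product of smooth functions is smooth. -/
theorem contDiffOn_finprod {ι : Type*} {f : ι → (Fin n → ℝ) → ℝ} (s : Finset ι) :
    (∀ i ∈ s, ContDiffOn ℝ (⊤ : ℕ∞) (f i) U) →
    ContDiffOn ℝ (⊤ : ℕ∞) (fun x => ∏ i ∈ s, f i x) U := by
  classical
  induction s using Finset.induction_on with
  | empty => intro _; simpa using contDiffOn_const
  | @insert a s ha ih =>
    intro h
    simp only [Finset.prod_insert ha]
    exact (h a (by simp)).mul (ih fun i hi => h i (by simp [hi]))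

theorem contDiffOn_det' {M : (Fin n → ℝ) → Matrix (Fin n) (Fin n) ℝ}
    (h : ∀ i j, ContDiffOn ℝ (⊤ : ℕ∞) (fun x => M x i j) U) :
    ContDiffOn ℝ (⊤ : ℕ∞) (fun x => (M x).det) U := by
  classical
  simp only [Matrix.det_apply']
  apply ContDiffOn.sum
  intro σ _
  exact contDiffOn_const.mul (contDiffOn_finprod Finset.univ (fun i _ => h (σ i) i))

theorem contDiffOn_inv_entry {g : (Fin n → ℝ) → Matrix (Fin n) (Fin n) ℝ}
    (hg : IsMetricOn U g) (k l : Fin n) :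
    ContDiffOn ℝ (⊤ : ℕ∞) (fun x => (g x)⁻¹ k l) U := by
  classical
  have hdet : ContDiffOn ℝ (⊤ : ℕ∞) (fun x => (g x).det) U := contDiffOn_det' hg.smooth
  have hadj : ContDiffOn ℝ (⊤ : ℕ∞) (fun x => (g x).adjugate k l) U := by
    simp only [Matrix.adjugate_apply]
    apply contDiffOn_det'
    intro i j
    simp only [Matrix.updateRow_apply]
    rcases eq_or_ne i l with hil | hil
    · have hc : ContDiffOn ℝ (⊤ : ℕ∞) (fun _ : Fin n → ℝ => (Pi.single k 1 : Fin n → ℝ) j) U :=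
        contDiffOn_const
      refine hc.congr ?_
      intro x hx; simp [hil]
    · refine (hg.smooth i j).congr ?_
      intro x hx; simp [hil]
  have hne : ∀ x ∈ U, (g x).det ≠ 0 := fun x hx => (isUnit_iff_ne_zero.mp (hg.nondeg x hx))
  refine ((hdet.inv hne).mul hadj).congr ?_
  intro x hx
  rw [Matrix.inv_def, Ring.inverse_eq_inv']
  simp [Matrix.smul_apply, smul_eq_mul]

theorem ContDiffOn.pd' {f : (Fin n → ℝ) → ℝ} (hf : ContDiffOn ℝ (⊤ : ℕ∞) f U)
    (hU : IsOpen U) (i : Fin n) : ContDiffOn ℝ (⊤ : ℕ∞) (pd i f) U := by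
  have h1 : ContDiffOn ℝ (⊤ : ℕ∞) (fderiv ℝ f) U := by
    have := hf.fderiv_of_isOpen hU (m := (⊤ : ℕ∞)) (by simp)
    exact this
  exact h1.clm_apply contDiffOn_const

theorem diffAt_of_contDiffOn {f : (Fin n → ℝ) → ℝ} (hf : ContDiffOn ℝ (⊤ : ℕ∞) f U)
    (hU : IsOpen U) {x : Fin n → ℝ} (hx : x ∈ U) : DifferentiableAt ℝ f x :=
  (hf.contDiffAt (hU.mem_nhds hx)).differentiableAt (by simp)

theorem single_sum_eq (w : Fin n → ℝ) : ∑ k, w k • (Pi.single k 1 : Fin n → ℝ) = w := by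
  funext j
  simp [Pi.single_apply]

theorem fderiv_apply_eq_sum_pd {f : (Fin n → ℝ) → ℝ} {x : Fin n → ℝ} (w : Fin n → ℝ) :
    fderiv ℝ f x w = ∑ k, w k * pd k f x := by
  conv_lhs => rw [← single_sum_eq w]
  rw [map_sum]
  simp [pd, smul_eq_mul]

theorem hasDerivAt_comp_curve {f : (Fin n → ℝ) → ℝ} {c : ℝ → Fin n → ℝ} {c' : Fin n → ℝ}
    {t : ℝ} (hf : DifferentiableAt ℝ f (c t)) (hc : HasDerivAt c c' t) :
    HasDerivAt (fun s => f (c s)) (∑ k, c' k * pd k f (c t)) t := by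
  have h := hf.hasFDerivAt.comp_hasDerivAt t hc
  rwa [fderiv_apply_eq_sum_pd c'] at h

theorem pd_congr_nhds {f h : (Fin n → ℝ) → ℝ} {x : Fin n → ℝ} (hfh : f =ᶠ[nhds x] h)
    (i : Fin n) : pd i f x = pd i h x := by
  simp only [pd, hfh.fderiv_eq]

theorem pd_add {f h : (Fin n → ℝ) → ℝ} {x : Fin n → ℝ} (hf : DifferentiableAt ℝ f x)
    (hh : DifferentiableAt ℝ h x) (i : Fin n) :
    pd i (fun y => f y + h y) x = pd i f x + pd i h x := by
  simp only [pd]; rw [fderiv_fun_add hf hh]; simp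

theorem pd_mul {f h : (Fin n → ℝ) → ℝ} {x : Fin n → ℝ} (hf : DifferentiableAt ℝ f x)
    (hh : DifferentiableAt ℝ h x) (i : Fin n) :
    pd i (fun y => f y * h y) x = f x * pd i h x + h x * pd i f x := by
  simp only [pd]; rw [fderiv_fun_mul hf hh]; simp [smul_eq_mul]

theorem pd_sum {ι : Type*} {s : Finset ι} {f : ι → (Fin n → ℝ) → ℝ} {x : Fin n → ℝ}
    (hf : ∀ j ∈ s, DifferentiableAt ℝ (f j) x) (i : Fin n) :
    pd i (fun y => ∑ j ∈ s, f j y) x = ∑ j ∈ s, pd i (f j) x := by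
  simp only [pd]; rw [fderiv_fun_sum hf]; simp

theorem pd_comm {f : (Fin n → ℝ) → ℝ} (hU : IsOpen U) (hf : ContDiffOn ℝ (⊤ : ℕ∞) f U)
    {q : Fin n → ℝ} (hq : q ∈ U) (k a : Fin n) :
    pd k (pd a f) q = pd a (pd k f) q := by
  have hF : ContDiffOn ℝ (⊤ : ℕ∞) (fderiv ℝ f) U := hf.fderiv_of_isOpen hU (by simp)
  have hFd : DifferentiableAt ℝ (fderiv ℝ f) q :=
    (hF.contDiffAt (hU.mem_nhds hq)).differentiableAt (by simp)
  have ev : ∀ w v : Fin n → ℝ, fderiv ℝ (fun x => fderiv ℝ f x w) q v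
      = fderiv ℝ (fderiv ℝ f) q v w := by
    intro w v
    have h2 := fderiv_clm_apply (c := fderiv ℝ f) (u := fun _ => w) hFd
      (differentiableAt_const w)
    rw [h2]
    simp
  have hsymm : IsSymmSndFDerivAt ℝ f q :=
    (hf.contDiffAt (hU.mem_nhds hq)).isSymmSndFDerivAt (by simp; exact WithTop.coe_le_coe.mpr le_top)
  show fderiv ℝ (pd a f) q (Pi.single k 1) = fderiv ℝ (pd k f) q (Pi.single a 1)
  have e1 : pd a f = fun x => fderiv ℝ f x (Pi.single a 1) := rfl
  have e2 : pd k f = fun x => fderiv ℝ f x (Pi.single k 1) := rfl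
  rw [e1, e2, ev, ev]
  exact hsymm _ _

theorem contDiffOn_gamma {g : (Fin n → ℝ) → Matrix (Fin n) (Fin n) ℝ}
    (hU : IsOpen U) (hg : IsMetricOn U g) (k i j : Fin n) :
    ContDiffOn ℝ (⊤ : ℕ∞) (Gamma g k i j) U := by
  have : Gamma g k i j = fun x => (1/2) * ∑ ℓ, (g x)⁻¹ k ℓ *
      (pd i (fun y => g y ℓ j) x + pd j (fun y => g y ℓ i) x - pd ℓ (fun y => g y i j) x) := rfl
  rw [this]
  refine contDiffOn_const.mul (ContDiffOn.sum fun ℓ _ => (contDiffOn_inv_entry hg k ℓ).mul ?_)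
  exact (((hg.smooth ℓ j).pd' hU i).add ((hg.smooth ℓ i).pd' hU j)).sub
    ((hg.smooth i j).pd' hU ℓ)

theorem ode_smooth {E : Type*} [NormedAddCommGroup E] [NormedSpace ℝ E]
    {F : E → E} {s : Set E} (hF : ContDiffOn ℝ (⊤ : ℕ∞) F s) (hs : IsOpen s)
    {y : ℝ → E} {J : Set ℝ} (hJ : IsOpen J) (hy : ∀ t ∈ J, HasDerivAt y (F (y t)) t)
    (hmem : ∀ t ∈ J, y t ∈ s) : ContDiffOn ℝ (⊤ : ℕ∞) y J := by
  have hdiff : DifferentiableOn ℝ y J := fun t ht =>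
    ((hy t ht).differentiableAt).differentiableWithinAt
  have hderiv : ∀ t ∈ J, deriv y t = F (y t) := fun t ht => (hy t ht).deriv
  have key : ∀ m : ℕ, ContDiffOn ℝ m y J := by
    intro m
    induction m with
    | zero =>
      simpa [contDiffOn_zero] using hdiff.continuousOn
    | succ m ih =>
      rw [show ((m + 1 : ℕ) : WithTop ℕ∞) = (m : WithTop ℕ∞) + 1 by norm_cast,
        contDiffOn_succ_iff_deriv_of_isOpen hJ]
      refine ⟨hdiff, by simp, ?_⟩
      refine ContDiffOn.congr ?_ hderiv
      exact (hF.of_le (by exact_mod_cast le_top)).comp ih hmem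
  have := contDiffOn_infty.mpr key
  exact_mod_cast this

/-- The geodesic vector field on phase space. -/
def geoF (g : (Fin n → ℝ) → Matrix (Fin n) (Fin n) ℝ) :
    (Fin n → ℝ) × (Fin n → ℝ) → (Fin n → ℝ) × (Fin n → ℝ) :=
  fun y => (y.2, fun k => -∑ i, ∑ j, Gamma g k i j y.1 * y.2 i * y.2 j)

theorem contDiffOn_geoF {g : (Fin n → ℝ) → Matrix (Fin n) (Fin n) ℝ}
    (hU : IsOpen U) (hg : IsMetricOn U g) :
    ContDiffOn ℝ (⊤ : ℕ∞) (geoF g) (U ×ˢ (Set.univ : Set (Fin n → ℝ))) := by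
  apply ContDiffOn.prodMk
  · exact contDiff_snd.contDiffOn
  · rw [contDiffOn_pi]
    intro k
    apply ContDiffOn.neg
    apply ContDiffOn.sum; intro i _
    apply ContDiffOn.sum; intro j _
    have h1 : ContDiffOn ℝ (⊤ : ℕ∞)
        (fun y : (Fin n → ℝ) × (Fin n → ℝ) => Gamma g k i j y.1)
        (U ×ˢ (Set.univ : Set (Fin n → ℝ))) :=
      (contDiffOn_gamma hU hg k i j).comp contDiff_fst.contDiffOn (fun y hy => hy.1)
    have h2 : ∀ m : Fin n, ContDiff ℝ (⊤ : ℕ∞)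
        (fun y : (Fin n → ℝ) × (Fin n → ℝ) => y.2 m) := fun m =>
      ((ContinuousLinearMap.proj m : (Fin n → ℝ) →L[ℝ] ℝ).contDiff).comp contDiff_snd
    exact (h1.mul (h2 i).contDiffOn).mul (h2 j).contDiffOn

theorem exists_geodesic {g : (Fin n → ℝ) → Matrix (Fin n) (Fin n) ℝ}
    (hU : IsOpen U) (hg : IsMetricOn U g) {q : Fin n → ℝ} (hq : q ∈ U) (v : Fin n → ℝ) :
    ∃ (γ : ℝ → Fin n → ℝ) (ε : ℝ), 0 < ε ∧ IsGeodesicOn U g γ (Set.Ioo (-ε) ε) ∧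
      γ 0 = q ∧ ∀ k, deriv (fun s => γ s k) 0 = v k := by
  classical
  set s := U ×ˢ (Set.univ : Set (Fin n → ℝ)) with hs_def
  have hso : IsOpen s := hU.prod isOpen_univ
  have hqv : (q, v) ∈ s := ⟨hq, trivial⟩
  have hFs := contDiffOn_geoF hU hg
  have hF1 : ContDiffAt ℝ 1 (geoF g) (q, v) :=
    (hFs.contDiffAt (hso.mem_nhds hqv)).of_le (by norm_cast)
  obtain ⟨y, hy0, ε₀, hε₀, hy⟩ := ContDiffAt.exists_forall_mem_closedBall_exists_eq_forall_mem_Ioo_hasDerivAt₀ hF1 0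
  have h0mem : (0 : ℝ) ∈ Set.Ioo (0 - ε₀) (0 + ε₀) := by
    constructor <;> simp [hε₀]
  have hc : ContinuousAt y 0 := (hy 0 h0mem).differentiableAt.continuousAt
  have hpre : y ⁻¹' s ∈ nhds (0 : ℝ) := hc.preimage_mem_nhds (hso.mem_nhds (by rw [hy0]; exact hqv))
  have hIoo : Set.Ioo (0 - ε₀) (0 + ε₀) ∈ nhds (0 : ℝ) := Ioo_mem_nhds h0mem.1 h0mem.2
  obtain ⟨δ, hδpos, hδsub⟩ := Metric.mem_nhds_iff.mp (Filter.inter_mem hpre hIoo)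
  set ε := min δ ε₀ with hε_def
  have hεpos : 0 < ε := lt_min hδpos hε₀
  set J := Set.Ioo (-ε) ε with hJ_def
  have hJsub : J ⊆ Metric.ball (0:ℝ) δ := by
    intro t ht
    rw [Real.ball_eq_Ioo]
    have hεδ : ε ≤ δ := min_le_left _ _
    constructor
    · have : (0:ℝ) - δ ≤ -ε := by simp [hεδ]
      exact lt_of_le_of_lt this ht.1
    · have : ε ≤ 0 + δ := by simpa using hεδ
      exact lt_of_lt_of_le ht.2 this
  have hJmem : ∀ t ∈ J, y t ∈ s ∧ t ∈ Set.Ioo (0 - ε₀) (0 + ε₀) := by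
    intro t ht
    have h := hδsub (hJsub ht)
    exact ⟨h.1, h.2⟩
  have hy' : ∀ t ∈ J, HasDerivAt y (geoF g (y t)) t := fun t ht => hy t (hJmem t ht).2
  have hymem : ∀ t ∈ J, y t ∈ s := fun t ht => (hJmem t ht).1
  have hysm : ContDiffOn ℝ (⊤ : ℕ∞) y J := ode_smooth hFs hso isOpen_Ioo hy' hymem
  have h0J : (0:ℝ) ∈ J := by constructor <;> simp [hεpos]
  set γ : ℝ → Fin n → ℝ := fun t => (y t).1 with hγ
  have hd1 : ∀ t ∈ J, ∀ k, HasDerivAt (fun s => γ s k) ((y t).2 k) t := by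
    intro t ht k
    set L : ((Fin n → ℝ) × (Fin n → ℝ)) →L[ℝ] ℝ :=
      (ContinuousLinearMap.proj k).comp (ContinuousLinearMap.fst ℝ _ _) with hL
    have h := L.hasFDerivAt.comp_hasDerivAt t (hy' t ht)
    exact h
  have hd2 : ∀ t ∈ J, ∀ k, HasDerivAt (fun s => (y s).2 k) ((geoF g (y t)).2 k) t := by
    intro t ht k
    set L : ((Fin n → ℝ) × (Fin n → ℝ)) →L[ℝ] ℝ :=
      (ContinuousLinearMap.proj k).comp (ContinuousLinearMap.snd ℝ _ _) with hL
    have h := L.hasFDerivAt.comp_hasDerivAt t (hy' t ht)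
    exact h
  refine ⟨γ, ε, hεpos, ⟨⟨isOpen_Ioo, Set.ordConnected_Ioo⟩, ?_, ?_, ?_⟩, ?_, ?_⟩
  · intro k
    set L : ((Fin n → ℝ) × (Fin n → ℝ)) →L[ℝ] ℝ :=
      (ContinuousLinearMap.proj k).comp (ContinuousLinearMap.fst ℝ _ _) with hL
    have h := (L.contDiff (n := (⊤ : ℕ∞))).comp_contDiffOn hysm
    exact h
  · intro t ht
    exact (hymem t ht).1
  · intro t ht k
    have e2 : ∀ i, deriv (fun s => γ s i) t = (y t).2 i := fun i => (hd1 t ht i).deriv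
    have hdd : deriv (deriv fun s => γ s k) t = (geoF g (y t)).2 k := by
      have heq : (deriv fun s => γ s k) =ᶠ[nhds t] (fun s => (y s).2 k) := by
        filter_upwards [isOpen_Ioo.mem_nhds ht] with u hu
        exact (hd1 u hu k).deriv
      rw [heq.deriv_eq]
      exact (hd2 t ht k).deriv
    rw [hdd]
    simp only [hγ, geoF] at e2 ⊢
    simp only [e2]
    exact neg_add_cancel _
  · show (y 0).1 = q
    rw [hy0]
  · intro k
    rw [(hd1 0 h0J k).deriv, hy0]

/-- The lowered Killing field `W_i = g_{ij} V^j`. -/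
def Wl (g : (Fin n → ℝ) → Matrix (Fin n) (Fin n) ℝ) (V : (Fin n → ℝ) → Fin n → ℝ) :
    (Fin n → ℝ) → Fin n → ℝ := fun x i => ∑ j, g x i j * V x j

theorem contDiffOn_W {g : (Fin n → ℝ) → Matrix (Fin n) (Fin n) ℝ}
    {V : (Fin n → ℝ) → Fin n → ℝ} (hg : IsMetricOn U g)
    (hVs : ∀ i : Fin n, ContDiffOn ℝ (⊤ : ℕ∞) (fun x => V x i) U) (i : Fin n) :
    ContDiffOn ℝ (⊤ : ℕ∞) (fun x => Wl g V x i) U :=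
  ContDiffOn.sum fun j _ => (hg.smooth i j).mul (hVs j)

theorem eval_single (C : Fin n → Fin n → ℝ) (x y : Fin n) :
    ∑ i, ∑ j, (Pi.single x 1 : Fin n → ℝ) i * (Pi.single y 1 : Fin n → ℝ) j * C i j = C x y := by
  simp [Pi.single_apply, ite_mul, mul_ite, Finset.sum_ite_eq']

theorem polarization {C : Fin n → Fin n → ℝ}
    (h : ∀ v : Fin n → ℝ, ∑ a, ∑ b, v a * v b * C a b = 0) (a b : Fin n) :
    C a b + C b a = 0 := by
  have h1 := h ((Pi.single a 1 : Fin n → ℝ) + (Pi.single b 1 : Fin n → ℝ))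
  have h2 := h (Pi.single a 1 : Fin n → ℝ)
  have h3 := h (Pi.single b 1 : Fin n → ℝ)
  have expand : ∀ i j : Fin n,
      ((Pi.single a 1 : Fin n → ℝ) + (Pi.single b 1 : Fin n → ℝ)) i
        * ((Pi.single a 1 : Fin n → ℝ) + (Pi.single b 1 : Fin n → ℝ)) j * C i j
      = (Pi.single a 1 : Fin n → ℝ) i * (Pi.single a 1 : Fin n → ℝ) j * C i j
        + ((Pi.single a 1 : Fin n → ℝ) i * (Pi.single b 1 : Fin n → ℝ) j * C i j
        + ((Pi.single b 1 : Fin n → ℝ) i * (Pi.single a 1 : Fin n → ℝ) j * C i j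
        + (Pi.single b 1 : Fin n → ℝ) i * (Pi.single b 1 : Fin n → ℝ) j * C i j)) := by
    intro i j
    simp only [Pi.add_apply]
    ring
  rw [Finset.sum_congr rfl (fun i _ => Finset.sum_congr rfl fun j _ => expand i j)] at h1
  simp only [Finset.sum_add_distrib] at h1
  rw [eval_single, eval_single, eval_single, eval_single] at h1
  rw [eval_single] at h2
  rw [eval_single] at h3
  rw [h2, h3] at h1
  linarith

theorem geodesic_killing {g : (Fin n → ℝ) → Matrix (Fin n) (Fin n) ℝ}
    {V : (Fin n → ℝ) → Fin n → ℝ}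
    (hU : IsOpen U) (hg : IsMetricOn U g)
    (hVs : ∀ i : Fin n, ContDiffOn ℝ (⊤ : ℕ∞) (fun x => V x i) U)
    (hKV : ∀ (γ : ℝ → (Fin n → ℝ)) (I : Set ℝ), IsGeodesicOn U g γ I →
      ∀ τ₁ ∈ I, ∀ τ₂ ∈ I,
        (∑ i, ∑ j, deriv (fun s => γ s i) τ₁ * g (γ τ₁) i j * V (γ τ₁) j) =
          ∑ i, ∑ j, deriv (fun s => γ s i) τ₂ * g (γ τ₂) i j * V (γ τ₂) j)
    {q : Fin n → ℝ} (hq : q ∈ U) (v : Fin n → ℝ) :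
    ∑ i, v i * (∑ k, v k * pd k (fun y => Wl g V y i) q)
      = ∑ i, (∑ a, ∑ b, Gamma g i a b q * v a * v b) * Wl g V q i := by
  obtain ⟨γ, ε, hε, hgeo, hγ0, hγ'0⟩ := exists_geodesic hU hg hq v
  set J := Set.Ioo (-ε) ε with hJ
  have h0J : (0:ℝ) ∈ J := ⟨neg_lt_zero.mpr hε, hε⟩
  set h : ℝ → ℝ := fun τ => ∑ i, deriv (fun s => γ s i) τ * Wl g V (γ τ) i with hh
  have hform : ∀ τ : ℝ,
      (∑ i, ∑ j, deriv (fun s => γ s i) τ * g (γ τ) i j * V (γ τ) j) = h τ := by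
    intro τ
    simp [hh, Wl, Finset.mul_sum, mul_assoc]
  have hconst : ∀ τ ∈ J, h τ = h 0 := by
    intro τ hτ
    have := hKV γ J hgeo τ hτ 0 h0J
    rwa [hform, hform] at this
  have hder0 : deriv h 0 = 0 := by
    have heq : h =ᶠ[nhds 0] fun _ => h 0 := by
      filter_upwards [isOpen_Ioo.mem_nhds h0J] with u hu
      exact hconst u hu
    rw [heq.deriv_eq]
    simp
  -- the velocity curve of γ
  have hγv : HasDerivAt γ v 0 := by
    rw [hasDerivAt_pi]
    intro k
    have hsm := hgeo.smooth k
    have hd : DifferentiableAt ℝ (fun s => γ s k) 0 :=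
      (hsm.contDiffAt (isOpen_Ioo.mem_nhds h0J)).differentiableAt (by simp)
    have := hd.hasDerivAt
    rwa [hγ'0 k] at this
  have hWd : ∀ i : Fin n, DifferentiableAt ℝ (fun y => Wl g V y i) q :=
    fun i => diffAt_of_contDiffOn (contDiffOn_W hg hVs i) hU hq
  have hD : HasDerivAt h
      (∑ i, (deriv (deriv fun s => γ s i) 0 * Wl g V (γ 0) i
        + deriv (fun s => γ s i) 0 * (∑ k, v k * pd k (fun y => Wl g V y i) (γ 0)))) 0 := by
    apply HasDerivAt.fun_sum
    intro i _
    have f1 : HasDerivAt (fun τ => deriv (fun s => γ s i) τ)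
        (deriv (deriv fun s => γ s i) 0) 0 := by
      have hsm := hgeo.smooth i
      have dsm : ContDiffOn ℝ (⊤ : ℕ∞) (deriv fun s => γ s i) J :=
        hsm.deriv_of_isOpen isOpen_Ioo (by simp)
      exact ((dsm.contDiffAt (isOpen_Ioo.mem_nhds h0J)).differentiableAt
        (by simp)).hasDerivAt
    have f2 : HasDerivAt (fun τ => Wl g V (γ τ) i)
        (∑ k, v k * pd k (fun y => Wl g V y i) (γ 0)) 0 := by
      have := hasDerivAt_comp_curve (f := fun y => Wl g V y i) (c := γ) (t := 0)
        (by rw [hγ0]; exact hWd i) hγv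
      exact this
    exact f1.mul f2
  have hsecond : ∀ i : Fin n, deriv (deriv fun s => γ s i) 0
      = -∑ a, ∑ b, Gamma g i a b q * v a * v b := by
    intro i
    have he := hgeo.eqn 0 h0J i
    have hrw : deriv (deriv fun s => γ s i) 0
        = -(∑ a, ∑ b, Gamma g i a b (γ 0) * deriv (fun s => γ s a) 0
            * deriv (fun s => γ s b) 0) := by
      linarith [he]
    rw [hrw, hγ0]
    congr 1
    refine Finset.sum_congr rfl fun a _ => Finset.sum_congr rfl fun b _ => ?_
    rw [hγ'0 a, hγ'0 b]
  have hsum0 : ∑ i, (deriv (deriv fun s => γ s i) 0 * Wl g V (γ 0) i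
      + deriv (fun s => γ s i) 0 * (∑ k, v k * pd k (fun y => Wl g V y i) (γ 0))) = 0 := by
    rw [← hD.deriv]
    exact hder0
  have hfin : ∑ i, (-(∑ a, ∑ b, Gamma g i a b q * v a * v b) * Wl g V q i
      + v i * (∑ k, v k * pd k (fun y => Wl g V y i) q)) = 0 := by
    refine Eq.trans ?_ hsum0
    refine Finset.sum_congr rfl fun i _ => ?_
    rw [hsecond i, hγ0, hγ'0 i]
  rw [Finset.sum_add_distrib] at hfin
  have hneg : ∑ i, -(∑ a, ∑ b, Gamma g i a b q * v a * v b) * Wl g V q i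
      = -∑ i, (∑ a, ∑ b, Gamma g i a b q * v a * v b) * Wl g V q i := by
    rw [← Finset.sum_neg_distrib]
    exact Finset.sum_congr rfl fun i _ => by ring
  rw [hneg] at hfin
  linarith

theorem killing_eq {g : (Fin n → ℝ) → Matrix (Fin n) (Fin n) ℝ}
    {V : (Fin n → ℝ) → Fin n → ℝ}
    (hU : IsOpen U) (hg : IsMetricOn U g)
    (hVs : ∀ i : Fin n, ContDiffOn ℝ (⊤ : ℕ∞) (fun x => V x i) U)
    (hKV : ∀ (γ : ℝ → (Fin n → ℝ)) (I : Set ℝ), IsGeodesicOn U g γ I →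
      ∀ τ₁ ∈ I, ∀ τ₂ ∈ I,
        (∑ i, ∑ j, deriv (fun s => γ s i) τ₁ * g (γ τ₁) i j * V (γ τ₁) j) =
          ∑ i, ∑ j, deriv (fun s => γ s i) τ₂ * g (γ τ₂) i j * V (γ τ₂) j)
    {q : Fin n → ℝ} (hq : q ∈ U) (a b : Fin n) :
    pd a (fun y => Wl g V y b) q + pd b (fun y => Wl g V y a) q
      = ∑ s, (Gamma g s a b q + Gamma g s b a q) * Wl g V q s := by
  set C : Fin n → Fin n → ℝ := fun a b =>
    pd b (fun y => Wl g V y a) q - ∑ s, Gamma g s a b q * Wl g V q s with hC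
  have hCzero : ∀ v : Fin n → ℝ, ∑ i, ∑ k, v i * v k * C i k = 0 := by
    intro v
    have hgk := geodesic_killing hU hg hVs hKV hq v
    have e1 : ∑ i, ∑ k, v i * v k * pd k (fun y => Wl g V y i) q
        = ∑ i, v i * (∑ k, v k * pd k (fun y => Wl g V y i) q) := by
      refine Finset.sum_congr rfl fun i _ => ?_
      rw [Finset.mul_sum]
      exact Finset.sum_congr rfl fun k _ => by ring
    have e2 : ∑ i, ∑ k, v i * v k * (∑ s, Gamma g s i k q * Wl g V q s)
        = ∑ s, (∑ i, ∑ k, Gamma g s i k q * v i * v k) * Wl g V q s := by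
      simp only [Finset.mul_sum, Finset.sum_mul]
      rw [Finset.sum_congr rfl fun i (_ : i ∈ Finset.univ) =>
        Finset.sum_comm (s := Finset.univ) (t := Finset.univ)
          (f := fun k s => v i * v k * (Gamma g s i k q * Wl g V q s))]
      rw [Finset.sum_comm]
      exact Finset.sum_congr rfl fun s _ => Finset.sum_congr rfl fun i _ =>
        Finset.sum_congr rfl fun k _ => by ring
    have e3 : ∑ i, ∑ k, v i * v k * C i k
        = ∑ i, ∑ k, v i * v k * pd k (fun y => Wl g V y i) q
          - ∑ i, ∑ k, v i * v k * (∑ s, Gamma g s i k q * Wl g V q s) := by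
      rw [← Finset.sum_sub_distrib]
      refine Finset.sum_congr rfl fun i _ => ?_
      rw [← Finset.sum_sub_distrib]
      refine Finset.sum_congr rfl fun k _ => ?_
      simp only [hC]
      ring
    rw [e3, e1, e2, hgk]
    ring
  have hpol := polarization hCzero a b
  simp only [hC] at hpol
  have : ∑ s, (Gamma g s a b q + Gamma g s b a q) * Wl g V q s
      = ∑ s, Gamma g s a b q * Wl g V q s + ∑ s, Gamma g s b a q * Wl g V q s := by
    rw [← Finset.sum_add_distrib]
    exact Finset.sum_congr rfl fun s _ => by ring
  rw [this]
  linarith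

/-- The right-hand side of the Killing equation. -/
def Fc (g : (Fin n → ℝ) → Matrix (Fin n) (Fin n) ℝ) (V : (Fin n → ℝ) → Fin n → ℝ)
    (a b : Fin n) : (Fin n → ℝ) → ℝ :=
  fun x => ∑ s, (Gamma g s a b x + Gamma g s b a x) * Wl g V x s

theorem contDiffOn_Fc {g : (Fin n → ℝ) → Matrix (Fin n) (Fin n) ℝ}
    {V : (Fin n → ℝ) → Fin n → ℝ} (hU : IsOpen U) (hg : IsMetricOn U g)
    (hVs : ∀ i : Fin n, ContDiffOn ℝ (⊤ : ℕ∞) (fun x => V x i) U) (a b : Fin n) :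
    ContDiffOn ℝ (⊤ : ℕ∞) (Fc g V a b) U :=
  ContDiffOn.sum fun s _ =>
    ((contDiffOn_gamma hU hg s a b).add (contDiffOn_gamma hU hg s b a)).mul
      (contDiffOn_W hg hVs s)

section SecondDeriv

variable {g : (Fin n → ℝ) → Matrix (Fin n) (Fin n) ℝ} {V : (Fin n → ℝ) → Fin n → ℝ}

theorem pdFc_eq (hU : IsOpen U) (hg : IsMetricOn U g)
    (hVs : ∀ i : Fin n, ContDiffOn ℝ (⊤ : ℕ∞) (fun x => V x i) U)
    (hKV : ∀ (γ : ℝ → (Fin n → ℝ)) (I : Set ℝ), IsGeodesicOn U g γ I →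
      ∀ τ₁ ∈ I, ∀ τ₂ ∈ I,
        (∑ i, ∑ j, deriv (fun s => γ s i) τ₁ * g (γ τ₁) i j * V (γ τ₁) j) =
          ∑ i, ∑ j, deriv (fun s => γ s i) τ₂ * g (γ τ₂) i j * V (γ τ₂) j)
    {z : Fin n → ℝ} (hz : z ∈ U) (k a b : Fin n) :
    pd k (Fc g V a b) z
      = pd k (pd a (fun y => Wl g V y b)) z + pd k (pd b (fun y => Wl g V y a)) z := by
  have hev : Fc g V a b =ᶠ[nhds z]
      fun y => pd a (fun y' => Wl g V y' b) y + pd b (fun y' => Wl g V y' a) y := by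
    filter_upwards [hU.mem_nhds hz] with y hy
    exact (killing_eq hU hg hVs hKV hy a b).symm
  rw [pd_congr_nhds hev k]
  exact pd_add
    (diffAt_of_contDiffOn ((contDiffOn_W hg hVs b).pd' hU a) hU hz)
    (diffAt_of_contDiffOn ((contDiffOn_W hg hVs a).pd' hU b) hU hz) k

theorem second_formula (hU : IsOpen U) (hg : IsMetricOn U g)
    (hVs : ∀ i : Fin n, ContDiffOn ℝ (⊤ : ℕ∞) (fun x => V x i) U)
    (hKV : ∀ (γ : ℝ → (Fin n → ℝ)) (I : Set ℝ), IsGeodesicOn U g γ I →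
      ∀ τ₁ ∈ I, ∀ τ₂ ∈ I,
        (∑ i, ∑ j, deriv (fun s => γ s i) τ₁ * g (γ τ₁) i j * V (γ τ₁) j) =
          ∑ i, ∑ j, deriv (fun s => γ s i) τ₂ * g (γ τ₂) i j * V (γ τ₂) j)
    {z : Fin n → ℝ} (hz : z ∈ U) (k a b : Fin n) :
    2 * pd k (pd a (fun y => Wl g V y b)) z
      = pd k (Fc g V a b) z + pd a (Fc g V k b) z - pd b (Fc g V k a) z := by
  have h1 := pdFc_eq hU hg hVs hKV hz k a b
  have h2 := pdFc_eq hU hg hVs hKV hz a k b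
  have h3 := pdFc_eq hU hg hVs hKV hz b k a
  have s1 := pd_comm hU (contDiffOn_W hg hVs b) hz k a
  have s2 := pd_comm hU (contDiffOn_W hg hVs a) hz k b
  have s3 := pd_comm hU (contDiffOn_W hg hVs k) hz a b
  linarith

theorem pdFc_expand (hU : IsOpen U) (hg : IsMetricOn U g)
    (hVs : ∀ i : Fin n, ContDiffOn ℝ (⊤ : ℕ∞) (fun x => V x i) U)
    {z : Fin n → ℝ} (hz : z ∈ U) (k a b : Fin n) :
    pd k (Fc g V a b) z = ∑ s,
      ((Gamma g s a b z + Gamma g s b a z) * pd k (fun y => Wl g V y s) z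
        + Wl g V z s * pd k (fun y => Gamma g s a b y + Gamma g s b a y) z) := by
  have : Fc g V a b = fun x => ∑ s, (Gamma g s a b x + Gamma g s b a x) * Wl g V x s := rfl
  rw [this, pd_sum (fun s _ => ?_) k]
  · refine Finset.sum_congr rfl fun s _ => ?_
    exact pd_mul
      (((contDiffOn_gamma hU hg s a b).add (contDiffOn_gamma hU hg s b a)).differentiableOn
        (by norm_cast) |>.differentiableAt (hU.mem_nhds hz))
      (diffAt_of_contDiffOn (contDiffOn_W hg hVs s) hU hz) k
  · exact (((contDiffOn_gamma hU hg s a b).add (contDiffOn_gamma hU hg s b a)).mul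
      (contDiffOn_W hg hVs s)).differentiableOn (by norm_cast)
      |>.differentiableAt (hU.mem_nhds hz)

end SecondDeriv

/-- Sum of absolute values of the Christoffel-type coefficients and their derivatives. -/
def CCf (g : (Fin n → ℝ) → Matrix (Fin n) (Fin n) ℝ) : (Fin n → ℝ) → ℝ := fun z =>
  ∑ k, ∑ a, ∑ b, ∑ s,
    (|pd k (fun y => Gamma g s a b y + Gamma g s b a y) z|
      + |Gamma g s a b z + Gamma g s b a z|)

/-- Total size of `W` and its first derivatives. -/
def Pf (g : (Fin n → ℝ) → Matrix (Fin n) (Fin n) ℝ) (V : (Fin n → ℝ) → Fin n → ℝ) :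
    (Fin n → ℝ) → ℝ := fun z =>
  (∑ s, |Wl g V z s|) + ∑ k, ∑ s, |pd k (fun y => Wl g V y s) z|

theorem le_sum4 (f : Fin n → Fin n → Fin n → Fin n → ℝ)
    (hf : ∀ k a b s, 0 ≤ f k a b s) (k a b s : Fin n) :
    f k a b s ≤ ∑ k, ∑ a, ∑ b, ∑ s, f k a b s := by
  have h4 : f k a b s ≤ ∑ s, f k a b s :=
    Finset.single_le_sum (fun s _ => hf k a b s) (Finset.mem_univ s)
  have h3 : ∑ s, f k a b s ≤ ∑ b, ∑ s, f k a b s :=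
    Finset.single_le_sum (f := fun b => ∑ s, f k a b s)
      (fun b _ => Finset.sum_nonneg fun s _ => hf k a b s) (Finset.mem_univ b)
  have h2 : ∑ b, ∑ s, f k a b s ≤ ∑ a, ∑ b, ∑ s, f k a b s :=
    Finset.single_le_sum (f := fun a => ∑ b, ∑ s, f k a b s)
      (fun a _ => Finset.sum_nonneg fun b _ => Finset.sum_nonneg fun s _ => hf k a b s)
      (Finset.mem_univ a)
  have h1 : ∑ a, ∑ b, ∑ s, f k a b s ≤ ∑ k, ∑ a, ∑ b, ∑ s, f k a b s :=
    Finset.single_le_sum (f := fun k => ∑ a, ∑ b, ∑ s, f k a b s)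
      (fun k _ => Finset.sum_nonneg fun a _ => Finset.sum_nonneg fun b _ =>
        Finset.sum_nonneg fun s _ => hf k a b s)
      (Finset.mem_univ k)
  linarith

theorem CCf_nonneg (g : (Fin n → ℝ) → Matrix (Fin n) (Fin n) ℝ) (z : Fin n → ℝ) :
    0 ≤ CCf g z :=
  Finset.sum_nonneg fun _ _ => Finset.sum_nonneg fun _ _ => Finset.sum_nonneg fun _ _ =>
    Finset.sum_nonneg fun _ _ => add_nonneg (abs_nonneg _) (abs_nonneg _)

theorem Pf_nonneg (g : (Fin n → ℝ) → Matrix (Fin n) (Fin n) ℝ)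
    (V : (Fin n → ℝ) → Fin n → ℝ) (z : Fin n → ℝ) : 0 ≤ Pf g V z :=
  add_nonneg (Finset.sum_nonneg fun _ _ => abs_nonneg _)
    (Finset.sum_nonneg fun _ _ => Finset.sum_nonneg fun _ _ => abs_nonneg _)

theorem le_CCf_pd {g : (Fin n → ℝ) → Matrix (Fin n) (Fin n) ℝ} (z : Fin n → ℝ)
    (k a b s : Fin n) :
    |pd k (fun y => Gamma g s a b y + Gamma g s b a y) z| ≤ CCf g z := by
  simp only [CCf]
  have h := le_sum4 (fun k a b s => |pd k (fun y => Gamma g s a b y + Gamma g s b a y) z|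
      + |Gamma g s a b z + Gamma g s b a z|)
    (fun _ _ _ _ => add_nonneg (abs_nonneg _) (abs_nonneg _)) k a b s
  have h2 : |pd k (fun y => Gamma g s a b y + Gamma g s b a y) z|
      ≤ |pd k (fun y => Gamma g s a b y + Gamma g s b a y) z|
        + |Gamma g s a b z + Gamma g s b a z| :=
    le_add_of_nonneg_right (abs_nonneg _)
  exact le_trans h2 h

theorem le_CCf_coef {g : (Fin n → ℝ) → Matrix (Fin n) (Fin n) ℝ} (z : Fin n → ℝ)
    (k a b s : Fin n) :
    |Gamma g s a b z + Gamma g s b a z| ≤ CCf g z := by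
  simp only [CCf]
  have h := le_sum4 (fun k a b s => |pd k (fun y => Gamma g s a b y + Gamma g s b a y) z|
      + |Gamma g s a b z + Gamma g s b a z|)
    (fun _ _ _ _ => add_nonneg (abs_nonneg _) (abs_nonneg _)) k a b s
  have h2 : |Gamma g s a b z + Gamma g s b a z|
      ≤ |pd k (fun y => Gamma g s a b y + Gamma g s b a y) z|
        + |Gamma g s a b z + Gamma g s b a z| :=
    le_add_of_nonneg_left (abs_nonneg _)
  exact le_trans h2 h

section BoundLemmas

variable {g : (Fin n → ℝ) → Matrix (Fin n) (Fin n) ℝ} {V : (Fin n → ℝ) → Fin n → ℝ}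

theorem pdFc_bound (hU : IsOpen U) (hg : IsMetricOn U g)
    (hVs : ∀ i : Fin n, ContDiffOn ℝ (⊤ : ℕ∞) (fun x => V x i) U)
    {z : Fin n → ℝ} (hz : z ∈ U) (k a b : Fin n) :
    |pd k (Fc g V a b) z| ≤ CCf g z * Pf g V z := by
  rw [pdFc_expand hU hg hVs hz k a b]
  have step1 : |∑ s, ((Gamma g s a b z + Gamma g s b a z) * pd k (fun y => Wl g V y s) z
      + Wl g V z s * pd k (fun y => Gamma g s a b y + Gamma g s b a y) z)|
      ≤ ∑ s, (CCf g z * |pd k (fun y => Wl g V y s) z| + CCf g z * |Wl g V z s|) := by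
    refine le_trans (Finset.abs_sum_le_sum_abs _ _) (Finset.sum_le_sum fun s _ => ?_)
    refine le_trans (abs_add_le _ _) ?_
    rw [abs_mul, abs_mul]
    have e1 := mul_le_mul_of_nonneg_right (le_CCf_coef (g := g) z k a b s)
      (abs_nonneg (pd k (fun y => Wl g V y s) z))
    have e2 := mul_le_mul_of_nonneg_left (le_CCf_pd (g := g) z k a b s) (abs_nonneg (Wl g V z s))
    have e3 : |Wl g V z s| * CCf g z = CCf g z * |Wl g V z s| := mul_comm _ _
    linarith
  refine le_trans step1 ?_
  have expand : ∑ s, (CCf g z * |pd k (fun y => Wl g V y s) z| + CCf g z * |Wl g V z s|)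
      = CCf g z * ((∑ s, |pd k (fun y => Wl g V y s) z|) + ∑ s, |Wl g V z s|) := by
    rw [Finset.sum_add_distrib, ← Finset.mul_sum, ← Finset.mul_sum, ← mul_add]
  rw [expand]
  refine mul_le_mul_of_nonneg_left ?_ (CCf_nonneg g z)
  have hsub : ∑ s, |pd k (fun y => Wl g V y s) z|
      ≤ ∑ m, ∑ s, |pd m (fun y => Wl g V y s) z| :=
    Finset.single_le_sum (f := fun m => ∑ s, |pd m (fun y => Wl g V y s) z|)
      (fun m _ => Finset.sum_nonneg fun s _ => abs_nonneg _) (Finset.mem_univ k)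
  simp only [Pf]
  linarith

theorem second_bound (hU : IsOpen U) (hg : IsMetricOn U g)
    (hVs : ∀ i : Fin n, ContDiffOn ℝ (⊤ : ℕ∞) (fun x => V x i) U)
    (hKV : ∀ (γ : ℝ → (Fin n → ℝ)) (I : Set ℝ), IsGeodesicOn U g γ I →
      ∀ τ₁ ∈ I, ∀ τ₂ ∈ I,
        (∑ i, ∑ j, deriv (fun s => γ s i) τ₁ * g (γ τ₁) i j * V (γ τ₁) j) =
          ∑ i, ∑ j, deriv (fun s => γ s i) τ₂ * g (γ τ₂) i j * V (γ τ₂) j)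
    {z : Fin n → ℝ} (hz : z ∈ U) (k a b : Fin n) :
    |pd k (pd a (fun y => Wl g V y b)) z| ≤ (3/2) * CCf g z * Pf g V z := by
  have h := second_formula hU hg hVs hKV hz k a b
  have b1 := abs_le.mp (pdFc_bound hU hg hVs hz k a b)
  have b2 := abs_le.mp (pdFc_bound hU hg hVs hz a k b)
  have b3 := abs_le.mp (pdFc_bound hU hg hVs hz b k a)
  rw [abs_le]
  constructor <;> [nlinarith; nlinarith]

end BoundLemmas

section GronStep

variable {g : (Fin n → ℝ) → Matrix (Fin n) (Fin n) ℝ} {V : (Fin n → ℝ) → Fin n → ℝ}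

theorem continuousOn_CCf (hU : IsOpen U) (hg : IsMetricOn U g) :
    ContinuousOn (CCf g) U := by
  refine continuousOn_finset_sum _ fun k _ => continuousOn_finset_sum _ fun a _ =>
    continuousOn_finset_sum _ fun b _ => continuousOn_finset_sum _ fun s _ => ?_
  refine ContinuousOn.add ?_ ?_
  · exact ((((contDiffOn_gamma hU hg s a b).add (contDiffOn_gamma hU hg s b a)).pd'
      hU k).continuousOn).abs
  · exact (((contDiffOn_gamma hU hg s a b).add (contDiffOn_gamma hU hg s b a)).continuousOn).abs

theorem gron_step (hU : IsOpen U) (hg : IsMetricOn U g)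
    (hVs : ∀ i : Fin n, ContDiffOn ℝ (⊤ : ℕ∞) (fun x => V x i) U)
    (hKV : ∀ (γ : ℝ → (Fin n → ℝ)) (I : Set ℝ), IsGeodesicOn U g γ I →
      ∀ τ₁ ∈ I, ∀ τ₂ ∈ I,
        (∑ i, ∑ j, deriv (fun s => γ s i) τ₁ * g (γ τ₁) i j * V (γ τ₁) j) =
          ∑ i, ∑ j, deriv (fun s => γ s i) τ₂ * g (γ τ₂) i j * V (γ τ₂) j)
    {q : Fin n → ℝ} {r : ℝ} (hr : 0 < r) (hball : Metric.closedBall q r ⊆ U)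
    (hW0 : ∀ i, Wl g V q i = 0)
    (hdW0 : ∀ k i, pd k (fun y => Wl g V y i) q = 0)
    {x : Fin n → ℝ} (hx : x ∈ Metric.closedBall q r) :
    (∀ i, Wl g V x i = 0) ∧ ∀ k i, pd k (fun y => Wl g V y i) x = 0 := by
  classical
  set D := Metric.closedBall q r with hD
  have hDcomp : IsCompact D := isCompact_closedBall q r
  have hqD : q ∈ D := Metric.mem_closedBall_self hr.le
  obtain ⟨z₀, hz₀D, hz₀max⟩ := hDcomp.exists_isMaxOn ⟨q, hqD⟩
    ((continuousOn_CCf hU hg).mono hball)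
  set Mc : ℝ := max (CCf g z₀) 0 with hMc
  have hMc0 : 0 ≤ Mc := le_max_right _ _
  have hCCle : ∀ z ∈ D, CCf g z ≤ Mc := fun z hz =>
    le_trans (hz₀max hz) (le_max_left _ _)
  set d : Fin n → ℝ := x - q with hd
  set c : ℝ → Fin n → ℝ := fun t => q + t • d with hc
  have hcder : ∀ t : ℝ, HasDerivAt c d t := by
    intro t
    have h1 : HasDerivAt (fun t : ℝ => t • d) ((1:ℝ) • d) t := (hasDerivAt_id t).smul_const d
    have h2 := h1.const_add q
    simpa [hc] using h2
  have hcD : ∀ t ∈ Icc (0:ℝ) 1, c t ∈ D := by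
    intro t ht
    rw [hD, Metric.mem_closedBall, dist_eq_norm]
    have : c t - q = t • d := by simp [hc]
    rw [this, norm_smul, Real.norm_eq_abs]
    have h1 : |t| ≤ 1 := abs_le.mpr ⟨by linarith [ht.1], ht.2⟩
    have h2 : ‖d‖ ≤ r := by
      rw [hd, ← dist_eq_norm]
      exact Metric.mem_closedBall.mp hx
    calc |t| * ‖d‖ ≤ 1 * ‖d‖ := mul_le_mul_of_nonneg_right h1 (norm_nonneg _)
      _ = ‖d‖ := one_mul _
      _ ≤ r := h2
  have hcU : ∀ t ∈ Icc (0:ℝ) 1, c t ∈ U := fun t ht => hball (hcD t ht)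
  -- the packaged function
  set f : ℝ → (Fin n → ℝ) × (Fin n → Fin n → ℝ) := fun t =>
    (fun i => Wl g V (c t) i, fun k i => pd k (fun y => Wl g V y i) (c t)) with hf
  set f' : ℝ → (Fin n → ℝ) × (Fin n → Fin n → ℝ) := fun t =>
    (fun i => ∑ m, d m * pd m (fun y => Wl g V y i) (c t),
     fun k i => ∑ m, d m * pd m (fun y => pd k (fun y' => Wl g V y' i) y) (c t)) with hf'
  have hfder : ∀ t ∈ Icc (0:ℝ) 1, HasDerivAt f (f' t) t := by
    intro t ht
    refine HasDerivAt.prodMk ?_ ?_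
    · rw [hasDerivAt_pi]
      intro i
      exact hasDerivAt_comp_curve
        (diffAt_of_contDiffOn (contDiffOn_W hg hVs i) hU (hcU t ht)) (hcder t)
    · rw [hasDerivAt_pi]
      intro k
      rw [hasDerivAt_pi]
      intro i
      exact hasDerivAt_comp_curve
        (diffAt_of_contDiffOn ((contDiffOn_W hg hVs i).pd' hU k) hU (hcU t ht)) (hcder t)
  -- key norm bounds
  have habs : ∀ t ∈ Icc (0:ℝ) 1, (∀ i, |Wl g V (c t) i| ≤ ‖f t‖)
      ∧ ∀ k i, |pd k (fun y => Wl g V y i) (c t)| ≤ ‖f t‖ := by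
    intro t ht
    constructor
    · intro i
      have h1 : |Wl g V (c t) i| = ‖(f t).1 i‖ := by simp [hf, Real.norm_eq_abs]
      rw [h1]
      exact le_trans (norm_le_pi_norm (f t).1 i) (norm_fst_le (f t))
    · intro k i
      have h1 : |pd k (fun y => Wl g V y i) (c t)| = ‖(f t).2 k i‖ := by
        simp [hf, Real.norm_eq_abs]
      rw [h1]
      exact le_trans (le_trans (norm_le_pi_norm ((f t).2 k) i)
        (norm_le_pi_norm (f t).2 k)) (norm_snd_le (f t))
  have hPle : ∀ t ∈ Icc (0:ℝ) 1, Pf g V (c t) ≤ ((n : ℝ) + n * n) * ‖f t‖ := by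
    intro t ht
    obtain ⟨hW, hdW⟩ := habs t ht
    have h1 : ∑ s, |Wl g V (c t) s| ≤ (n : ℝ) * ‖f t‖ := by
      calc ∑ s, |Wl g V (c t) s| ≤ ∑ _s : Fin n, ‖f t‖ := Finset.sum_le_sum fun s _ => hW s
        _ = (n : ℝ) * ‖f t‖ := by simp [mul_comm]
    have h2 : ∑ k, ∑ s, |pd k (fun y => Wl g V y s) (c t)| ≤ ((n : ℝ) * n) * ‖f t‖ := by
      calc ∑ k, ∑ s, |pd k (fun y => Wl g V y s) (c t)|
          ≤ ∑ _k : Fin n, ∑ _s : Fin n, ‖f t‖ :=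
            Finset.sum_le_sum fun k _ => Finset.sum_le_sum fun s _ => hdW k s
        _ = ((n : ℝ) * n) * ‖f t‖ := by simp [mul_comm, mul_assoc]
    simp only [Pf]
    nlinarith [norm_nonneg (f t)]
  set K : ℝ := (n : ℝ) * ‖d‖ * (1 + (3/2) * Mc * ((n : ℝ) + n * n)) with hK
  have hK0 : 0 ≤ K := by
    have : (0:ℝ) ≤ (3/2) * Mc * ((n : ℝ) + n * n) := by positivity
    have h2 : (0:ℝ) ≤ (n : ℝ) * ‖d‖ := by positivity
    nlinarith
  have hbound : ∀ t ∈ Ico (0:ℝ) 1, ‖f' t‖ ≤ K * ‖f t‖ + 0 := by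
    intro t ht
    have ht' : t ∈ Icc (0:ℝ) 1 := ⟨ht.1, ht.2.le⟩
    obtain ⟨hW, hdW⟩ := habs t ht'
    have hft0 : (0:ℝ) ≤ ‖f t‖ := norm_nonneg _
    have hdm : ∀ m, |d m| ≤ ‖d‖ := fun m => by
      have := norm_le_pi_norm d m
      rwa [Real.norm_eq_abs] at this
    have hnd : (0:ℝ) ≤ (n : ℝ) * ‖d‖ := by positivity
    have hMcP : (0:ℝ) ≤ (3/2) * Mc := by positivity
    have hnn : (0:ℝ) ≤ (n : ℝ) + n * n := by positivity
    have hP := hPle t ht'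
    rw [add_zero, Prod.norm_def]
    have hKf : (0:ℝ) ≤ K * ‖f t‖ := mul_nonneg hK0 hft0
    refine max_le ?_ ?_
    · rw [pi_norm_le_iff_of_nonneg hKf]
      intro i
      rw [Real.norm_eq_abs]
      have step : |∑ m, d m * pd m (fun y => Wl g V y i) (c t)|
          ≤ ∑ _m : Fin n, ‖d‖ * ‖f t‖ := by
        refine le_trans (Finset.abs_sum_le_sum_abs _ _) (Finset.sum_le_sum fun m _ => ?_)
        rw [abs_mul]
        exact mul_le_mul (hdm m) (hdW m i) (abs_nonneg _) (norm_nonneg _)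
      refine le_trans step ?_
      rw [Finset.sum_const, Finset.card_univ, Fintype.card_fin, nsmul_eq_mul, hK]
      nlinarith [mul_nonneg (mul_nonneg (mul_nonneg hnd hMcP) hnn) hft0]
    · rw [pi_norm_le_iff_of_nonneg hKf]
      intro k
      rw [pi_norm_le_iff_of_nonneg hKf]
      intro i
      rw [Real.norm_eq_abs]
      have hsecond : ∀ m, |pd m (fun y => pd k (fun y' => Wl g V y' i) y) (c t)|
          ≤ (3/2) * Mc * Pf g V (c t) := by
        intro m
        have h1 := second_bound hU hg hVs hKV (hcU t ht') m k i
        have h2 : (3/2) * CCf g (c t) * Pf g V (c t) ≤ (3/2) * Mc * Pf g V (c t) := by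
          have := hCCle (c t) (hcD t ht')
          nlinarith [Pf_nonneg g V (c t)]
        exact le_trans h1 h2
      have step : |∑ m, d m * pd m (fun y => pd k (fun y' => Wl g V y' i) y) (c t)|
          ≤ ∑ _m : Fin n, ‖d‖ * ((3/2) * Mc * Pf g V (c t)) := by
        refine le_trans (Finset.abs_sum_le_sum_abs _ _) (Finset.sum_le_sum fun m _ => ?_)
        rw [abs_mul]
        refine mul_le_mul (hdm m) (hsecond m) (abs_nonneg _) (norm_nonneg _)
      refine le_trans step ?_
      rw [Finset.sum_const, Finset.card_univ, Fintype.card_fin, nsmul_eq_mul, hK]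
      have hm1 : (3/2) * Mc * Pf g V (c t) ≤ (3/2) * Mc * (((n:ℝ) + n*n) * ‖f t‖) :=
        mul_le_mul_of_nonneg_left hP hMcP
      nlinarith [mul_nonneg hnd hft0, mul_le_mul_of_nonneg_left hm1 hnd]
  have hf0 : ‖f 0‖ ≤ 0 := by
    have hc0 : c 0 = q := by simp [hc]
    have : f 0 = 0 := by
      rw [hf]
      refine Prod.ext ?_ ?_
      · funext i
        simp only [hc0]
        exact hW0 i
      · funext k i
        simp only [hc0]
        exact hdW0 k i
    rw [this, norm_zero]
  have hcont : ContinuousOn f (Icc (0:ℝ) 1) := fun t ht =>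
    ((hfder t ht).continuousAt).continuousWithinAt
  have hfinal := norm_le_gronwallBound_of_norm_deriv_right_le hcont
    (fun t ht => (hfder t ⟨ht.1, ht.2.le⟩).hasDerivWithinAt) hf0 hbound
  have h1 : ‖f 1‖ ≤ 0 := by
    have := hfinal 1 ⟨zero_le_one, le_refl 1⟩
    rwa [sub_zero, gronwallBound_ε0_δ0] at this
  have hf1 : f 1 = 0 := by
    rwa [← norm_le_zero_iff]
  have hc1 : c 1 = x := by simp [hc, hd]
  constructor
  · intro i
    have := congrFun (congrArg Prod.fst hf1) i
    simpa [hf, hc1] using this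
  · intro k i
    have := congrFun (congrFun (congrArg Prod.snd hf1) k) i
    simpa [hf, hc1] using this

end GronStep

end KillingProof

theorem Killing_vector_vanishing_to_order_one_is_zero {n : ℕ} (hn : 2 ≤ n) (U : Set (Fin n → ℝ)) (hUo : IsOpen U) (hUc : IsConnected U)
    (g : (Fin n → ℝ) → Matrix (Fin n) (Fin n) ℝ) (hg : IsMetricOn U g)
    (V : (Fin n → ℝ) → Fin n → ℝ)
    (hVs : ∀ i : Fin n, ContDiffOn ℝ (⊤ : ℕ∞) (fun x => V x i) U)
    (hKV : ∀ (γ : ℝ → (Fin n → ℝ)) (I : Set ℝ), IsGeodesicOn U g γ I →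
      ∀ τ₁ ∈ I, ∀ τ₂ ∈ I,
        (∑ i, ∑ j, deriv (fun s => γ s i) τ₁ * g (γ τ₁) i j * V (γ τ₁) j) =
          ∑ i, ∑ j, deriv (fun s => γ s i) τ₂ * g (γ τ₂) i j * V (γ τ₂) j)
    (p : Fin n → ℝ) (hp : p ∈ U)
    (hvan0 : ∀ i : Fin n, V p i = 0)
    (hvan1 : ∀ i j : Fin n, pd i (fun x => V x j) p = 0) :
    ∀ x ∈ U, V x = 0 := by
  classical
  set Z : Set (Fin n → ℝ) := {x | x ∈ U ∧ (∀ i, Wl g V x i = 0)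
    ∧ ∀ k i, pd k (fun y => Wl g V y i) x = 0} with hZdef
  -- Z is open
  have hZopen : IsOpen Z := by
    rw [Metric.isOpen_iff]
    intro q hq
    obtain ⟨hqU, hW0, hdW0⟩ := hq
    obtain ⟨r, hr, hball⟩ := Metric.nhds_basis_closedBall.mem_iff.mp (hUo.mem_nhds hqU)
    refine ⟨r, hr, ?_⟩
    intro x hx
    have hx' : x ∈ Metric.closedBall q r := Metric.ball_subset_closedBall hx
    obtain ⟨h1, h2⟩ := gron_step hUo hg hVs hKV hr hball hW0 hdW0 hx'
    exact ⟨hball hx', h1, h2⟩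
  -- p ∈ Z
  have hpZ : p ∈ Z := by
    refine ⟨hp, ?_, ?_⟩
    · intro i
      simp [Wl, hvan0]
    · intro k i
      have : (fun y => Wl g V y i) = fun y => ∑ j, g y i j * V y j := rfl
      rw [this, pd_sum (fun j _ => ((diffAt_of_contDiffOn (hg.smooth i j) hUo hp).fun_mul
        (diffAt_of_contDiffOn (hVs j) hUo hp))) k]
      refine Finset.sum_eq_zero fun j _ => ?_
      rw [pd_mul (diffAt_of_contDiffOn (hg.smooth i j) hUo hp)
        (diffAt_of_contDiffOn (hVs j) hUo hp) k]
      rw [hvan0 j, hvan1 k j]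
      ring
  -- limit points of Z inside U belong to Z
  have hclo : closure Z ∩ U ⊆ Z := by
    rintro x ⟨hxc, hxU⟩
    obtain ⟨u, hu, hlim⟩ := mem_closure_iff_seq_limit.mp hxc
    have hWlim : ∀ i, Wl g V x i = 0 := by
      intro i
      have hcont : ContinuousAt (fun y => Wl g V y i) x :=
        (contDiffOn_W hg hVs i).continuousOn.continuousAt (hUo.mem_nhds hxU)
      have ht : Filter.Tendsto (fun m => Wl g V (u m) i) Filter.atTop
          (nhds (Wl g V x i)) := hcont.tendsto.comp hlim
      have heq : (fun m => Wl g V (u m) i) = fun _ => (0:ℝ) :=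
        funext fun m => (hu m).2.1 i
      rw [heq] at ht
      exact (tendsto_nhds_unique ht tendsto_const_nhds)
    have hdWlim : ∀ k i, pd k (fun y => Wl g V y i) x = 0 := by
      intro k i
      have hcont : ContinuousAt (fun y => pd k (fun y' => Wl g V y' i) y) x :=
        ((contDiffOn_W hg hVs i).pd' hUo k).continuousOn.continuousAt (hUo.mem_nhds hxU)
      have ht : Filter.Tendsto (fun m => pd k (fun y' => Wl g V y' i) (u m)) Filter.atTop
          (nhds (pd k (fun y' => Wl g V y' i) x)) := hcont.tendsto.comp hlim
      have heq : (fun m => pd k (fun y' => Wl g V y' i) (u m)) = fun _ => (0:ℝ) :=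
        funext fun m => (hu m).2.2 k i
      rw [heq] at ht
      exact (tendsto_nhds_unique ht tendsto_const_nhds)
    exact ⟨hxU, hWlim, hdWlim⟩
  have hsub : U ⊆ Z :=
    hUc.isPreconnected.subset_of_closure_inter_subset hZopen ⟨p, hp, hpZ⟩ hclo
  -- conclude
  intro x hx
  obtain ⟨hxU, hW0, _⟩ := hsub hx
  have hWv : g x *ᵥ V x = 0 := by
    funext i
    have := hW0 i
    simpa [Matrix.mulVec, dotProduct, Wl] using this
  calc V x = (1 : Matrix (Fin n) (Fin n) ℝ) *ᵥ V x := (Matrix.one_mulVec _).symm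
    _ = ((g x)⁻¹ * g x) *ᵥ V x := by rw [Matrix.nonsing_inv_mul (g x) (hg.nondeg x hxU)]
    _ = (g x)⁻¹ *ᵥ (g x *ᵥ V x) := (Matrix.mulVec_mulVec _ _ _).symm
    _ = 0 := by rw [hWv, Matrix.mulVec_zero]
end

section
/- Let f : ℝ → ℝ be a smooth nowhere-vanishing function, let k ∈ ℕ, and let p, q ∈ ℝ with p ≠ q. Then there exists a smooth nowhere-vanishing function f' : ℝ → ℝ such that f' − f vanishes at p together with all its derivatives of order ≤ k (i.e., f' coincides with f at p up to order k), while all derivatives of f' of orders 1 through k vanish at q (i.e., f' is constant at q up to order k). -/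
open Matrix

noncomputable section

theorem perturb_nowhere_vanishing_function (f : ℝ → ℝ)
    (hf : ContDiff ℝ (⊤ : ℕ∞) f) (hf0 : ∀ x, f x ≠ 0)
    (k : ℕ) (p q : ℝ) (hpq : p ≠ q) :
    ∃ f' : ℝ → ℝ, ContDiff ℝ (⊤ : ℕ∞) f' ∧ (∀ x, f' x ≠ 0) ∧
      (∀ j ≤ k, iteratedDeriv j (fun x => f' x - f x) p = 0) ∧
      (∀ j, 1 ≤ j → j ≤ k → iteratedDeriv j f' q = 0) := by
  have hd : (0 : ℝ) < dist p q := dist_pos.2 hpq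
  set d := dist p q with hdd
  obtain ⟨χ, hrIn, hrOut⟩ :
      ∃ χ : ContDiffBump p, χ.rIn = d/2 ∧ χ.rOut = 3*d/4 :=
    ⟨⟨d/2, 3*d/4, by linarith, by linarith⟩, rfl, rfl⟩
  -- f has the same sign everywhere
  have hsign : ∀ x, 0 < f x * f q := by
    intro x
    rcases lt_trichotomy (f x * f q) 0 with h | h | h
    · exfalso
      have h0 : (0 : ℝ) ∈ Set.uIcc (f x) (f q) := by
        rcases mul_neg_iff.1 h with ⟨h1, h2⟩ | ⟨h1, h2⟩
        · exact Set.mem_uIcc.2 (Or.inr ⟨h2.le, h1.le⟩)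
        · exact Set.mem_uIcc.2 (Or.inl ⟨h1.le, h2.le⟩)
      obtain ⟨c, _, hc⟩ :=
        intermediate_value_uIcc (hf.continuous.continuousOn (s := Set.uIcc x q)) h0
      exact hf0 c hc
    · exact absurd (mul_eq_zero.1 h) (by push_neg; exact ⟨hf0 x, hf0 q⟩)
    · exact h
  refine ⟨fun x => χ x * f x + (1 - χ x) * f q, ?_, ?_, ?_, ?_⟩
  · exact (χ.contDiff.mul hf).add ((contDiff_const.sub χ.contDiff).mul contDiff_const)
  · intro x
    show χ x * f x + (1 - χ x) * f q ≠ 0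
    intro hcon
    have ht0 : (0:ℝ) ≤ χ x := χ.nonneg
    have ht1 : χ x ≤ 1 := χ.le_one
    have hzero : χ x * f x = 0 ∧ (1 - χ x) * f q = 0 := by
      rcases mul_pos_iff.1 (hsign x) with ⟨h1, h2⟩ | ⟨h1, h2⟩
      · have a1 : 0 ≤ χ x * f x := mul_nonneg ht0 h1.le
        have a2 : 0 ≤ (1 - χ x) * f q := mul_nonneg (by linarith) h2.le
        constructor <;> linarith
      · have a1 : χ x * f x ≤ 0 := mul_nonpos_of_nonneg_of_nonpos ht0 h1.le
        have a2 : (1 - χ x) * f q ≤ 0 :=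
          mul_nonpos_of_nonneg_of_nonpos (by linarith) h2.le
        constructor <;> linarith
    have e1 : χ x = 0 := by
      rcases mul_eq_zero.1 hzero.1 with h | h
      · exact h
      · exact absurd h (hf0 x)
    have e2 : (1:ℝ) - χ x = 0 := by
      rcases mul_eq_zero.1 hzero.2 with h | h
      · exact h
      · exact absurd h (hf0 q)
    rw [e1] at e2; norm_num at e2
  · intro j hj
    have hev : (fun x => (χ x * f x + (1 - χ x) * f q) - f x) =ᶠ[nhds p]
        (fun _ => (0:ℝ)) := by
      filter_upwards [Metric.ball_mem_nhds p (by linarith : (0:ℝ) < d/2)] with x hx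
      have hone : χ x = 1 := χ.one_of_mem_closedBall (by
        rw [hrIn]; exact Metric.ball_subset_closedBall hx)
      simp [hone]
    rw [hev.iteratedDeriv_eq j, iteratedDeriv_eq_iteratedFDeriv]
    simp [iteratedFDeriv_zero_fun]
  · intro j hj1 hj2
    have hev : (fun x => χ x * f x + (1 - χ x) * f q) =ᶠ[nhds q]
        (fun _ => f q) := by
      filter_upwards [Metric.ball_mem_nhds q (by linarith : (0:ℝ) < d/4)] with x hx
      have hzero : χ x = 0 := by
        apply χ.zero_of_le_dist
        rw [hrOut]
        have h1 : dist x q < d / 4 := hx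
        have h2 : dist p q ≤ dist p x + dist x q := dist_triangle p x q
        rw [dist_comm x p]
        linarith
      simp [hzero]
    rw [hev.iteratedDeriv_eq j, iteratedDeriv_eq_iteratedFDeriv,
      iteratedFDeriv_const_of_ne (by omega) (f q)]
    rfl
end
end
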